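/- If |||·||| is a monotone norm on the bounded operators of a finite-dimensional Hilbert space (i.e., 0 ≤ B ≤ A implies |||B||| ≤ |||A|||), then for positive invertible A, B, the parallel sum satisfies |||A:B||| ≤ |||A||| : |||B|||, where on the right-hand side the parallel sum of positive real numbers is a:b = (a^{-1}+b^{-1})^{-1} = ab/(a+b). -/

import Mathlib

open scoped ComplexOrder

/-- If `ν` is a monotone norm on the `N × N` complex matrices (viewed as operators on a
finite-dimensional Hilbert space), i.e. a norm such that `0 ≤ B ≤ A` implies `ν B ≤ ν A`,
then for positive definite `A`, `B` the parallel sum satisfies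
`ν ((A⁻¹ + B⁻¹)⁻¹) ≤ ν A * ν B / (ν A + ν B)`, the right-hand side being the parallel
sum of the positive reals `ν A` and `ν B`. -/
theorem monotone_norm_parallel_sum
    (N : ℕ) (ν : Matrix (Fin N) (Fin N) ℂ → ℝ)
    (hdef : ∀ X, ν X = 0 → X = 0)
    (htri : ∀ X Y, ν (X + Y) ≤ ν X + ν Y)
    (hhom : ∀ (c : ℂ) (X), ν (c • X) = ‖c‖ * ν X)
    (hmono : ∀ X Y : Matrix (Fin N) (Fin N) ℂ,
      Y.PosSemidef → (X - Y).PosSemidef → ν Y ≤ ν X)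
    (A B : Matrix (Fin N) (Fin N) ℂ) (hA : A.PosDef) (hB : B.PosDef) :
    ν ((A⁻¹ + B⁻¹)⁻¹) ≤ ν A * ν B / (ν A + ν B) := by
  have h0 : ν 0 = 0 := by
    have := hhom 0 0
    simpa using this
  rcases eq_or_ne N 0 with hN | hN
  · subst hN
    have hsub : (A⁻¹ + B⁻¹)⁻¹ = 0 := Subsingleton.elim _ _
    have hA0 : A = 0 := Subsingleton.elim _ _
    have hB0 : B = 0 := Subsingleton.elim _ _
    rw [hsub, hA0, hB0, h0]
    simp
  have hpos : ∀ X : Matrix (Fin N) (Fin N) ℂ, X.PosSemidef → 0 ≤ ν X := by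
    intro X hX
    have h := hmono X 0 .zero (by simpa using hX)
    rw [h0] at h
    exact h
  have hNe : Nonempty (Fin N) := ⟨⟨0, Nat.pos_of_ne_zero hN⟩⟩
  have hnz : ∀ X : Matrix (Fin N) (Fin N) ℂ, X.PosDef → 0 < ν X := by
    intro X hX
    rcases (hpos X hX.posSemidef).lt_or_eq with h | h
    · exact h
    · exact absurd (hdef X h.symm) (by
        intro hX0
        have := hX.det_pos
        rw [hX0, Matrix.det_zero] at this
        exact lt_irrefl 0 this)
  set a := ν A with ha_def
  set b := ν B with hb_def
  have ha : 0 < a := hnz A hA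
  have hb : 0 < b := hnz B hB
  have hab : 0 < a + b := by linarith
  set t : ℝ := b / (a + b) with ht_def
  set s : ℝ := a / (a + b) with hs_def
  have hst : s = 1 - t := by rw [hs_def, ht_def]; field_simp; ring
  have hstc : ((s : ℝ) : ℂ) = 1 - ((t : ℝ) : ℂ) := by
    rw [hst]; push_cast; ring
  -- matrix setup
  have hABd : (A + B).PosDef := hA.add hB
  have hdetAB : IsUnit (A + B).det := isUnit_iff_ne_zero.mpr hABd.det_pos.ne'
  have hdetA : IsUnit A.det := isUnit_iff_ne_zero.mpr hA.det_pos.ne'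
  have hdetB : IsUnit B.det := isUnit_iff_ne_zero.mpr hB.det_pos.ne'
  set C : Matrix (Fin N) (Fin N) ℂ := (A + B)⁻¹ with hC_def
  have hCAB : C * (A + B) = 1 := Matrix.nonsing_inv_mul _ hdetAB
  have hABC : (A + B) * C = 1 := Matrix.mul_nonsing_inv _ hdetAB
  have hkey : (A⁻¹ + B⁻¹)⁻¹ = B * C * A := by
    have h1 : A⁻¹ + B⁻¹ = A⁻¹ * (A + B) * B⁻¹ := by
      rw [Matrix.mul_add, Matrix.add_mul, Matrix.nonsing_inv_mul _ hdetA,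
        Matrix.mul_assoc, Matrix.mul_nonsing_inv _ hdetB]
      simp [add_comm]
    rw [h1, Matrix.mul_inv_rev, Matrix.mul_inv_rev,
      Matrix.nonsing_inv_nonsing_inv _ hdetA, Matrix.nonsing_inv_nonsing_inv _ hdetB,
      Matrix.mul_assoc]
  have hACB : A * C * B = A - A * C * A := by
    have h2 : A * C * (A + B) = A := by
      rw [Matrix.mul_assoc, hCAB, Matrix.mul_one]
    rw [Matrix.mul_add] at h2
    exact eq_sub_of_add_eq' h2
  have hBCA : B * C * A = A - A * C * A := by
    have h2 : A + B ≠ 0 → True := fun _ => trivial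
    have h3 : (A + B) * C * A = A := by rw [hABC, Matrix.one_mul]
    simp only [Matrix.add_mul] at h3
    exact eq_sub_of_add_eq' h3
  have hBCB : B * C * B = B - (A - A * C * A) := by
    have h3 : B * C * (A + B) = B := by rw [Matrix.mul_assoc, hCAB, Matrix.mul_one]
    rw [Matrix.mul_add, hBCA] at h3
    exact eq_sub_of_add_eq' h3
  set D : Matrix (Fin N) (Fin N) ℂ := ((t : ℝ) : ℂ) • A - ((s : ℝ) : ℂ) • B with hD_def
  have hDCD : D * C * D = (((t : ℝ) : ℂ))^2 • A + (((s : ℝ) : ℂ))^2 • B - B * C * A := by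
    simp only [hD_def, sub_mul, mul_sub, smul_mul_assoc, mul_smul_comm]
    rw [hACB, hBCA, hBCB, hstc]
    module
  have hDH : D.conjTranspose = D := by
    simp [hD_def, Matrix.conjTranspose_smul, hA.1.eq, hB.1.eq, Complex.conj_ofReal]
  have hPsd : ((A⁻¹ + B⁻¹)⁻¹).PosSemidef := ((hA.inv.add hB.inv).inv).posSemidef
  have hDiff : ((((t : ℝ) : ℂ))^2 • A + (((s : ℝ) : ℂ))^2 • B - (A⁻¹ + B⁻¹)⁻¹).PosSemidef := by
    have h6 := (hABd.inv.posSemidef).conjTranspose_mul_mul_same D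
    rw [hDH, ← hC_def, hDCD, ← hkey] at h6
    exact h6
  have hstep : ν ((A⁻¹ + B⁻¹)⁻¹) ≤ ν ((((t : ℝ) : ℂ))^2 • A + (((s : ℝ) : ℂ))^2 • B) :=
    hmono _ _ hPsd hDiff
  have hnorm : ν ((((t : ℝ) : ℂ))^2 • A + (((s : ℝ) : ℂ))^2 • B) ≤ t^2 * a + s^2 * b := by
    refine (htri _ _).trans ?_
    rw [hhom, hhom]
    have h4 : ‖(((t : ℝ) : ℂ))^2‖ = t^2 := by
      rw [norm_pow, Complex.norm_real, Real.norm_eq_abs, sq_abs]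
    have h5 : ‖(((s : ℝ) : ℂ))^2‖ = s^2 := by
      rw [norm_pow, Complex.norm_real, Real.norm_eq_abs, sq_abs]
    rw [h4, h5]
  have hfinal : t^2 * a + s^2 * b = a * b / (a + b) := by
    rw [ht_def, hs_def]
    field_simp
    ring
  linarith [hstep.trans hnorm]
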